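/- Let F be a finite nonempty type, let P be an F-by-F real matrix with nonnegative entries such that every row of P sums to 1, let α be a real number with 0 < α < 1, let w : F → ℝ satisfy w(i) > 0 for all i and the detailed-balance condition w(i)·P[i,j] = w(j)·P[j,i] for all i, j, and let s : F → ℝ satisfy s(i) > 0 for all i. For an integer t ≥ 0, define R = ∑_{ℓ=0}^{∞} (1−α)·α^ℓ · P^ℓ and its truncation R_t = ∑_{ℓ=0}^{t} (1−α)·α^ℓ · P^ℓ, and set C(e) = ∑_{i ∈ F} (w(i)/s(i))·R[i,e] and C'_t(e) = ∑_{i ∈ F} (w(i)/s(i))·R_t[i,e]. Then for every e ∈ F: 0 ≤ C(e) − C'_t(e) ≤ w(e) · α^{t+1} / (min_{i ∈ F} s(i)). -/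

import Mathlib

open Matrix Finset

/-- Approximation guarantee for EdgeRAKE: truncating the ERWR series at
step `t` incurs an error between `0` and `w e · α^{t+1} / min_i s i`. -/
theorem stmt_13 {F : Type*} [Fintype F] [Nonempty F] [DecidableEq F]
    (P : Matrix F F ℝ)
    (hP : ∀ i j, 0 ≤ P i j)
    (hrow : ∀ i, ∑ j, P i j = 1)
    (α : ℝ) (hα : 0 < α) (hα1 : α < 1)
    (w : F → ℝ) (hw : ∀ i, 0 < w i)
    (hdb : ∀ i j, w i * P i j = w j * P j i)
    (s : F → ℝ) (hs : ∀ i, 0 < s i)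
    (t : ℕ)
    (R : Matrix F F ℝ) (hR : R = ∑' ℓ : ℕ, ((1 - α) * α ^ ℓ) • P ^ ℓ)
    (Rt : Matrix F F ℝ) (hRt : Rt = ∑ ℓ ∈ Finset.range (t + 1), ((1 - α) * α ^ ℓ) • P ^ ℓ)
    (C C' : F → ℝ)
    (hC : ∀ e, C e = ∑ i, (w i / s i) * R i e)
    (hC' : ∀ e, C' e = ∑ i, (w i / s i) * Rt i e) :
    ∀ e, 0 ≤ C e - C' e ∧
      C e - C' e ≤ w e * α ^ (t + 1) / (Finset.univ.inf' Finset.univ_nonempty s) := by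
  intro e
  set m := Finset.univ.inf' Finset.univ_nonempty s with hmdef
  obtain ⟨i₀, -, hi₀⟩ := Finset.exists_mem_eq_inf' Finset.univ_nonempty s
  have hm0 : 0 < m := by rw [hmdef, hi₀]; exact hs i₀
  have hmle : ∀ i, m ≤ s i := fun i => Finset.inf'_le s (Finset.mem_univ i)
  have h1α : (0:ℝ) ≤ 1 - α := by linarith
  -- entries of powers are nonnegative
  have hPn : ∀ (n : ℕ) (i j : F), 0 ≤ (P ^ n) i j := by
    intro n
    induction n with
    | zero =>
      intro i j
      by_cases h : i = j <;> simp [pow_zero, Matrix.one_apply, h]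
    | succ n ih =>
      intro i j
      rw [pow_succ, Matrix.mul_apply]
      exact Finset.sum_nonneg fun k _ => mul_nonneg (ih i k) (hP k j)
  -- rows of powers sum to 1
  have hProw : ∀ (n : ℕ) (i : F), ∑ j, (P ^ n) i j = 1 := by
    intro n
    induction n with
    | zero =>
      intro i
      simp [pow_zero, Matrix.one_apply]
    | succ n ih =>
      intro i
      rw [pow_succ]
      simp only [Matrix.mul_apply]
      rw [Finset.sum_comm]
      calc ∑ k, ∑ j, (P ^ n) i k * P k j
          = ∑ k, (P ^ n) i k * ∑ j, P k j := by
            refine Finset.sum_congr rfl fun k _ => ?_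
            rw [Finset.mul_sum]
        _ = ∑ k, (P ^ n) i k := by
            refine Finset.sum_congr rfl fun k _ => ?_
            rw [hrow k, mul_one]
        _ = 1 := ih i
  -- detailed balance for powers
  have hdbn : ∀ (n : ℕ) (i j : F), w i * (P ^ n) i j = w j * (P ^ n) j i := by
    intro n
    induction n with
    | zero =>
      intro i j
      by_cases h : i = j
      · simp [h]
      · simp [pow_zero, Matrix.one_apply, h, Ne.symm h]
    | succ n ih =>
      intro i j
      conv_lhs => rw [pow_succ]
      conv_rhs => rw [pow_succ']
      rw [Matrix.mul_apply, Matrix.mul_apply, Finset.mul_sum, Finset.mul_sum]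
      refine Finset.sum_congr rfl fun k _ => ?_
      calc w i * ((P ^ n) i k * P k j)
          = (w i * (P ^ n) i k) * P k j := by ring
        _ = (w k * (P ^ n) k i) * P k j := by rw [ih]
        _ = (P ^ n) k i * (w k * P k j) := by ring
        _ = (P ^ n) k i * (w j * P j k) := by rw [hdb]
        _ = w j * (P j k * (P ^ n) k i) := by ring
  -- entry of power is ≤ 1
  have hle1 : ∀ (n : ℕ) (i j : F), (P ^ n) i j ≤ 1 := by
    intro n i j
    calc (P ^ n) i j ≤ ∑ k, (P ^ n) i k :=
          Finset.single_le_sum (fun k _ => hPn n i k) (Finset.mem_univ j)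
      _ = 1 := hProw n i
  -- summability of entries
  have hgeo : Summable fun ℓ : ℕ => (1 - α) * α ^ ℓ :=
    (summable_geometric_of_lt_one hα.le hα1).mul_left (1 - α)
  have hsum : ∀ i j : F, Summable (fun ℓ : ℕ => ((1 - α) * α ^ ℓ) * (P ^ ℓ) i j) := by
    intro i j
    refine Summable.of_nonneg_of_le (fun ℓ => ?_) (fun ℓ => ?_) hgeo
    · exact mul_nonneg (mul_nonneg h1α (pow_nonneg hα.le ℓ)) (hPn ℓ i j)
    · exact mul_le_of_le_one_right (mul_nonneg h1α (pow_nonneg hα.le ℓ)) (hle1 ℓ i j)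
  -- matrix summability
  have hMsum : Summable (fun ℓ : ℕ => ((1 - α) * α ^ ℓ) • P ^ ℓ) := by
    refine Pi.summable.2 fun i => Pi.summable.2 fun j => ?_
    simpa [Matrix.smul_apply, smul_eq_mul] using hsum i j
  have hRe : ∀ i j : F, R i j = ∑' ℓ : ℕ, ((1 - α) * α ^ ℓ) * (P ^ ℓ) i j := by
    intro i j
    rw [hR]
    erw [tsum_apply hMsum, tsum_apply (Pi.summable.1 hMsum i)]
    exact tsum_congr fun ℓ => by simp [Matrix.smul_apply, smul_eq_mul]
  have hRte : ∀ i j : F, Rt i j = ∑ ℓ ∈ Finset.range (t + 1), ((1 - α) * α ^ ℓ) * (P ^ ℓ) i j := by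
    intro i j
    rw [hRt]
    simp [Matrix.sum_apply, Matrix.smul_apply, smul_eq_mul]
  -- tail formula
  have key : ∀ i : F, R i e - Rt i e =
      ∑' ℓ : ℕ, ((1 - α) * α ^ (ℓ + (t + 1))) * (P ^ (ℓ + (t + 1))) i e := by
    intro i
    have h := Summable.sum_add_tsum_nat_add (t + 1) (hsum i e)
    rw [hRe, hRte]
    linarith [h]
  have htail_sum : ∀ i j : F,
      Summable (fun ℓ : ℕ => ((1 - α) * α ^ (ℓ + (t + 1))) * (P ^ (ℓ + (t + 1))) i j) := by
    intro i j
    exact (summable_nat_add_iff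
      (f := fun ℓ : ℕ => ((1 - α) * α ^ ℓ) * (P ^ ℓ) i j) (t + 1)).2 (hsum i j)
  have htail_nonneg : ∀ i : F, 0 ≤ R i e - Rt i e := by
    intro i
    rw [key i]
    exact tsum_nonneg fun ℓ =>
      mul_nonneg (mul_nonneg h1α (pow_nonneg hα.le _)) (hPn _ i e)
  have hdiff : C e - C' e = ∑ i, (w i / s i) * (R i e - Rt i e) := by
    rw [hC, hC', ← Finset.sum_sub_distrib]
    exact Finset.sum_congr rfl fun i _ => by ring
  constructor
  · rw [hdiff]
    exact Finset.sum_nonneg fun i _ =>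
      mul_nonneg (div_nonneg (hw i).le (hs i).le) (htail_nonneg i)
  · rw [hdiff]
    have step1 : ∑ i, (w i / s i) * (R i e - Rt i e)
        ≤ ∑ i, (w i / m) * (R i e - Rt i e) := by
      refine Finset.sum_le_sum fun i _ => ?_
      refine mul_le_mul_of_nonneg_right ?_ (htail_nonneg i)
      exact div_le_div_of_nonneg_left (hw i).le hm0 (hmle i)
    have step2 : ∑ i, (w i / m) * (R i e - Rt i e)
        = (1 / m) * ∑ i, w i * (R i e - Rt i e) := by
      rw [Finset.mul_sum]
      exact Finset.sum_congr rfl fun i _ => by ring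
    have hwsum : ∀ i : F, w i * (R i e - Rt i e)
        = ∑' ℓ : ℕ, ((1 - α) * α ^ (ℓ + (t + 1))) * (w e * (P ^ (ℓ + (t + 1))) e i) := by
      intro i
      rw [key i, ← tsum_mul_left]
      exact tsum_congr fun ℓ => by rw [show w i * (((1 - α) * α ^ (ℓ + (t + 1))) *
        (P ^ (ℓ + (t + 1))) i e) = ((1 - α) * α ^ (ℓ + (t + 1))) *
        (w i * (P ^ (ℓ + (t + 1))) i e) from by ring, hdbn]
    have step3 : ∑ i, w i * (R i e - Rt i e) = w e * α ^ (t + 1) := by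
      calc ∑ i, w i * (R i e - Rt i e)
          = ∑' ℓ : ℕ, ∑ i, ((1 - α) * α ^ (ℓ + (t + 1))) * (w e * (P ^ (ℓ + (t + 1))) e i) := by
            rw [Finset.sum_congr rfl fun i _ => hwsum i]
            rw [← Summable.tsum_finsetSum (fun i _ => by
              have := (htail_sum e i).mul_left (w e)
              refine this.congr fun ℓ => by ring)]
        _ = ∑' ℓ : ℕ, ((1 - α) * α ^ (ℓ + (t + 1))) * w e := by
            refine tsum_congr fun ℓ => ?_
            rw [← Finset.mul_sum]
            have : ∑ i, w e * (P ^ (ℓ + (t + 1))) e i = w e := by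
              rw [← Finset.mul_sum, hProw, mul_one]
            rw [this]
        _ = w e * α ^ (t + 1) := by
            have h2 : ∀ ℓ : ℕ, ((1 - α) * α ^ (ℓ + (t + 1))) * w e
                = ((1 - α) * w e * α ^ (t + 1)) * α ^ ℓ := fun ℓ => by
              rw [pow_add]; ring
            have hne : (1:ℝ) - α ≠ 0 := by linarith
            rw [tsum_congr h2, tsum_mul_left, tsum_geometric_of_lt_one hα.le hα1]
            field_simp
    calc ∑ i, (w i / s i) * (R i e - Rt i e)
        ≤ (1 / m) * ∑ i, w i * (R i e - Rt i e) := by rw [← step2]; exact step1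
      _ = w e * α ^ (t + 1) / m := by rw [step3]; ring
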